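/- With s(c,σ) defined by the recurrence s(c,σ) = s(c-1, σ+(-1)^c·2) + s(c-2, σ+(-1)^c·2) + s(c-2, σ) for c ≥ 5 and base cases s(3,2)=1, s(4,0)=1 (zero otherwise), the following symmetries hold for all c ≥ 3: if c is even then s(c,σ) = s(c,-σ) for all σ; if c is odd then s(c,2) = s(c,4) + 1, and s(c,σ) = s(c,6-σ) whenever σ ≥ 6 or σ ≤ 0. -/

import Mathlib

def sCount : ℕ → ℤ → ℕ
  | 0, _ => 0
  | 1, _ => 0
  | 2, _ => 0
  | 3, σ => if σ = 2 then 1 else 0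
  | 4, σ => if σ = 0 then 1 else 0
  | (c + 5), σ =>
      sCount (c + 4) (σ + (-1) ^ (c + 5) * 2) +
        sCount (c + 3) (σ + (-1) ^ (c + 5) * 2) + sCount (c + 3) σ

def Psym (c : ℕ) : Prop :=
  (Even c → (∀ σ : ℤ, sCount c σ = sCount c (-σ)) ∧
    (∀ σ : ℤ, sCount c σ + sCount (c-1) σ = sCount c (2-σ) + sCount (c-1) (2-σ))) ∧
  (Odd c → (sCount c 2 = sCount c 4 + 1) ∧
    (∀ σ : ℤ, (6 ≤ σ ∨ σ ≤ 0) → sCount c σ = sCount c (6-σ)) ∧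
    (∀ σ : ℤ, sCount c σ + sCount (c-1) σ = sCount c (4-σ) + sCount (c-1) (4-σ)))

lemma sCount_step_even (n : ℕ) (hn : Odd n) (σ : ℤ) :
    sCount (n+5) σ = sCount (n+4) (σ+2) + sCount (n+3) (σ+2) + sCount (n+3) σ := by
  have h : ((-1:ℤ)) ^ (n+5) = 1 := (hn.add_odd (⟨2, by norm_num⟩ : Odd 5)).neg_one_pow
  rw [sCount, h]; norm_num

lemma sCount_step_odd (n : ℕ) (hn : Even n) (σ : ℤ) :
    sCount (n+5) σ = sCount (n+4) (σ-2) + sCount (n+3) (σ-2) + sCount (n+3) σ := by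
  have h : ((-1:ℤ)) ^ (n+5) = -1 := (hn.add_odd (⟨2, by norm_num⟩ : Odd 5)).neg_one_pow
  rw [sCount, h]
  norm_num
  ring_nf

lemma psym3 : Psym 3 := by
  constructor
  · intro h; exact absurd h (by decide)
  · intro _
    refine ⟨by simp [sCount], fun σ hσ => ?_, fun σ => ?_⟩
    · simp only [sCount]
      rw [if_neg (by omega), if_neg (by omega)]
    · simp only [sCount, show (3:ℕ) - 1 = 2 from rfl]
      split_ifs <;> omega

lemma psym4 : Psym 4 := by
  constructor
  · intro _
    refine ⟨fun σ => ?_, fun σ => ?_⟩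
    · simp only [sCount]; split_ifs <;> omega
    · simp only [sCount, show (4:ℕ) - 1 = 3 from rfl]; split_ifs <;> omega
  · intro h; exact absurd h (by decide)

lemma psym_aux : ∀ n : ℕ, Psym (n + 3)
  | 0 => psym3
  | 1 => psym4
  | (n+2) => by
    have IH4 : Psym (n+4) := psym_aux (n+1)
    have IH3 : Psym (n+3) := psym_aux n
    show Psym (n+5)
    rcases Nat.even_or_odd n with hn | hn
    · -- n even, n+5 odd, n+4 even, n+3 odd
      have h5 : Odd (n+5) := hn.add_odd ⟨2, by norm_num⟩
      have h4 : Even (n+4) := hn.add (by decide)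
      have h3 : Odd (n+3) := hn.add_odd ⟨1, by norm_num⟩
      obtain ⟨hsym4, hpair4⟩ := IH4.1 h4
      have hpair4 : ∀ σ : ℤ, sCount (n+4) σ + sCount (n+3) σ = sCount (n+4) (2-σ) + sCount (n+3) (2-σ) := hpair4
      obtain ⟨hval3, hsym3, hpair3⟩ := IH3.2 h3
      constructor
      · intro h; exact absurd h (by simpa using h5)
      · intro _
        refine ⟨?_, fun σ hσ => ?_, fun σ => ?_⟩
        · rw [sCount_step_odd n hn 2, sCount_step_odd n hn 4]
          have h1 := hpair4 0
          norm_num at h1 ⊢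
          omega
        · rw [sCount_step_odd n hn σ, sCount_step_odd n hn (6-σ)]
          have h1 := hpair4 (σ-2)
          have h2 := hsym3 σ hσ
          have e1 : (2:ℤ) - (σ-2) = 4-σ := by ring
          have e2 : (6:ℤ) - σ - 2 = 4-σ := by ring
          rw [e1] at h1; rw [e2]
          omega
        · show sCount (n+5) σ + sCount (n+4) σ = sCount (n+5) (4-σ) + sCount (n+4) (4-σ)
          rw [sCount_step_odd n hn σ, sCount_step_odd n hn (4-σ)]
          have h1 := hpair4 (σ-2)
          have h2 := hpair4 σ
          have e1 : (2:ℤ) - (σ-2) = 4-σ := by ring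
          have e2 : (4:ℤ) - σ - 2 = 2-σ := by ring
          rw [e1] at h1; rw [e2]
          omega
    · -- n odd, n+5 even, n+4 odd, n+3 even
      have h5 : Even (n+5) := hn.add_odd ⟨2, by norm_num⟩
      have h4 : Odd (n+4) := hn.add_even (by decide)
      have h3 : Even (n+3) := hn.add_odd ⟨1, by norm_num⟩
      obtain ⟨hval4, hsym4, hpair4⟩ := IH4.2 h4
      have hpair4 : ∀ σ : ℤ, sCount (n+4) σ + sCount (n+3) σ = sCount (n+4) (4-σ) + sCount (n+3) (4-σ) := hpair4
      obtain ⟨hsym3, hpair3⟩ := IH3.1 h3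
      constructor
      · intro _
        refine ⟨fun σ => ?_, fun σ => ?_⟩
        · rw [sCount_step_even n hn σ, sCount_step_even n hn (-σ)]
          have h1 := hpair4 (2-σ)
          have h2 := hsym3 σ
          have e1 : (4:ℤ) - (2-σ) = σ+2 := by ring
          have e2 : (-σ:ℤ) + 2 = 2-σ := by ring
          rw [e1] at h1; rw [e2]
          omega
        · show sCount (n+5) σ + sCount (n+4) σ = sCount (n+5) (2-σ) + sCount (n+4) (2-σ)
          rw [sCount_step_even n hn σ, sCount_step_even n hn (2-σ)]
          have h1 := hpair4 (σ+2)
          have h2 := hpair4 σ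
          have e1 : (4:ℤ) - (σ+2) = 2-σ := by ring
          have e2 : (2:ℤ) - σ + 2 = 4-σ := by ring
          rw [e1] at h1; rw [e2]
          omega
      · intro h; exact absurd h (by simpa using h5)

theorem sCount_symmetries (c : ℕ) (hc : 3 ≤ c) :
    (Even c → ∀ σ : ℤ, sCount c σ = sCount c (-σ)) ∧
    (Odd c → sCount c 2 = sCount c 4 + 1) ∧
    (Odd c → ∀ σ : ℤ, (6 ≤ σ ∨ σ ≤ 0) → sCount c σ = sCount c (6 - σ)) := by
  obtain ⟨k, rfl⟩ : ∃ k, c = k + 3 := ⟨c - 3, by omega⟩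
  have h := psym_aux k
  exact ⟨fun he => (h.1 he).1, fun ho => (h.2 ho).1, fun ho => (h.2 ho).2.1⟩
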